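/- Let (x₀, ẋ₀) ∈ ℝ² with F₀ ≠ 0, and set Δ₁ = Λ₀ + Σ₀·ẋ₀ and T* = 2Λ₀ + Σ₀·ẋ₀. Then there exist a continuously differentiable function x : ℝ → ℝ and a control u : ℝ → ℝ with |u(t)| ≤ 1 for all t ∈ [0, T*], such that x(0) = x₀, the derivative of x at 0 equals ẋ₀, for all t ∈ [0, T*] with t ≠ Δ₁ the derivative of (deriv x) at t equals u(t) (with u(t) = −Σ₀ for t < Δ₁ and u(t) = Σ₀ for t > Δ₁), and x(T*) = 0 with deriv x (T*) = 0. (The bang-bang control with one switch at Δ₁ steers the double integrator from (x₀, ẋ₀) to the origin in time T*.) -/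

import Mathlib

open Filter Topology

lemma hasDeriv_sqmax (a t : ℝ) :
    HasDerivAt (fun s => max (s - a) 0 ^ 2) (2 * max (t - a) 0) t := by
  rcases lt_trichotomy t a with h | h | h
  · have heq : (fun s => max (s - a) 0 ^ 2) =ᶠ[𝓝 t] fun _ => (0:ℝ) := by
      filter_upwards [eventually_lt_nhds h] with s hs
      simp [max_eq_right (le_of_lt (by linarith : s - a < 0))]
    have h0 : HasDerivAt (fun _ : ℝ => (0:ℝ)) 0 t := hasDerivAt_const t 0
    have := h0.congr_of_eventuallyEq heq
    simpa [max_eq_right (le_of_lt (by linarith : t - a < 0))] using this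
  · subst h
    rw [hasDerivAt_iff_tendsto_slope]
    simp only [sub_self, max_self, mul_zero]
    have hb : ∀ s : ℝ, s ≠ t → ‖slope (fun s => max (s - t) 0 ^ 2) t s‖ ≤ |s - t| := by
      intro s hs
      have hst : s - t ≠ 0 := sub_ne_zero.mpr hs
      rw [slope_def_field]
      have h1 : max (s - t) 0 ^ 2 ≤ (s - t) ^ 2 := by
        rcases le_or_gt (s - t) 0 with h' | h'
        · simp [max_eq_right h', sq_nonneg]
        · simp [max_eq_left h'.le]
      have h2 : (0:ℝ) ≤ max (s - t) 0 ^ 2 := by positivity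
      have : (max (s - t) 0 ^ 2 - max (t - t) 0 ^ 2) / (s - t)
          = max (s - t) 0 ^ 2 / (s - t) := by simp
      rw [this, Real.norm_eq_abs, abs_div, div_le_iff₀ (abs_pos.mpr hst),
        abs_mul_abs_self, abs_of_nonneg h2]
      rw [← pow_two]; exact h1
    refine squeeze_zero_norm' (a := fun s => |s - t|) ?_ ?_
    · filter_upwards [self_mem_nhdsWithin] with s hs using hb s hs
    · have : Filter.Tendsto (fun s : ℝ => |s - t|) (𝓝 t) (𝓝 0) := by
        have : Filter.Tendsto (fun s : ℝ => s - t) (𝓝 t) (𝓝 (t - t)) :=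
          (continuous_id.sub continuous_const).tendsto t
        simpa using this.abs
      exact this.mono_left nhdsWithin_le_nhds
  · have heq : (fun s => max (s - a) 0 ^ 2) =ᶠ[𝓝 t] fun s => (s - a) ^ 2 := by
      filter_upwards [eventually_gt_nhds h] with s hs
      simp [max_eq_left (by linarith : (0:ℝ) ≤ s - a)]
    have h1 : HasDerivAt (fun s : ℝ => (s - a) ^ 2) (2 * (t - a)) t := by
      have := ((hasDerivAt_id t).sub_const a).pow 2
      exact this.congr_deriv (by simp)
    have := h1.congr_of_eventuallyEq heq
    simpa [max_eq_left (by linarith : (0:ℝ) ≤ t - a)] using this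

/-- If `F₀ ≠ 0`, the bang-bang control with one switch at `Δ₁ = Λ₀ + σ₀·v₀`
steers the double integrator from `(x₀, v₀)` to the origin in time
`T* = 2Λ₀ + σ₀·v₀`. -/
theorem double_integrator_bang_bang_steers_to_origin
    (x₀ v₀ : ℝ) (hF : x₀ + Real.sign v₀ * v₀ ^ 2 / 2 ≠ 0)
    (σ₀ Λ₀ Δ₁ T : ℝ)
    (hσ : σ₀ = Real.sign (x₀ + Real.sign v₀ * v₀ ^ 2 / 2))
    (hΛ : Λ₀ = Real.sqrt (σ₀ * x₀ + v₀ ^ 2 / 2))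
    (hΔ : Δ₁ = Λ₀ + σ₀ * v₀)
    (hT : T = 2 * Λ₀ + σ₀ * v₀) :
    ∃ (x : ℝ → ℝ) (u : ℝ → ℝ),
      ContDiff ℝ 1 x
      ∧ (∀ t ∈ Set.Icc (0 : ℝ) T, |u t| ≤ 1)
      ∧ x 0 = x₀
      ∧ deriv x 0 = v₀
      ∧ (∀ t ∈ Set.Icc (0 : ℝ) T, t ≠ Δ₁ → deriv (deriv x) t = u t)
      ∧ (∀ t ∈ Set.Icc (0 : ℝ) T, t < Δ₁ → u t = -σ₀)
      ∧ (∀ t ∈ Set.Icc (0 : ℝ) T, t > Δ₁ → u t = σ₀)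
      ∧ x T = 0
      ∧ deriv x T = 0 := by
  -- basic sign facts
  have hσ1 : σ₀ = 1 ∨ σ₀ = -1 := by
    rcases hF.lt_or_gt with h | h
    · right; rw [hσ, Real.sign_of_neg h]
    · left; rw [hσ, Real.sign_of_pos h]
  have hσ2 : σ₀ ^ 2 = 1 := by rcases hσ1 with h | h <;> rw [h] <;> norm_num
  have hsv2 : Real.sign v₀ * v₀ ^ 2 = v₀ * |v₀| := by
    rcases lt_trichotomy v₀ 0 with h | h | h
    · rw [Real.sign_of_neg h, abs_of_neg h]; ring
    · simp [h]
    · rw [Real.sign_of_pos h, abs_of_pos h]; ring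
  have hF' : 0 < σ₀ * (x₀ + v₀ * |v₀| / 2) := by
    rcases hF.lt_or_gt with h | h
    · have hσ' : σ₀ = -1 := by rw [hσ, Real.sign_of_neg h]
      rw [hσ']; nlinarith [hsv2]
    · have hσ' : σ₀ = 1 := by rw [hσ, Real.sign_of_pos h]
      rw [hσ']; nlinarith [hsv2]
  have habs1 : v₀ * |v₀| ≤ v₀ ^ 2 := by
    nlinarith [abs_nonneg v₀, sq_abs v₀, le_abs_self v₀]
  have habs2 : -(v₀ ^ 2) ≤ v₀ * |v₀| := by
    nlinarith [abs_nonneg v₀, sq_abs v₀, neg_abs_le v₀]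
  have harg : 0 < σ₀ * x₀ + v₀ ^ 2 / 2 := by
    rcases hσ1 with h | h <;> rw [h] <;> rw [h] at hF' <;> nlinarith [hF', habs1, habs2]
  have hΛpos : 0 < Λ₀ := by rw [hΛ]; exact Real.sqrt_pos.mpr harg
  have hΛsq : Λ₀ ^ 2 = σ₀ * x₀ + v₀ ^ 2 / 2 := by
    rw [hΛ, Real.sq_sqrt harg.le]
  have hΔpos : 0 < Δ₁ := by
    rcases le_or_gt 0 (σ₀ * v₀) with h | h
    · rw [hΔ]; linarith
    · rcases hσ1 with h1 | h1
      · rw [h1] at h hΔ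
        have hv : v₀ < 0 := by linarith
        have habs : |v₀| = -v₀ := abs_of_neg hv
        rw [h1] at hF' hΛsq
        rw [hΔ]
        nlinarith [hF', hΛsq, hΛpos, habs]
      · rw [h1] at h hΔ
        have hv : 0 < v₀ := by nlinarith
        have habs : |v₀| = v₀ := abs_of_pos hv
        rw [h1] at hF' hΛsq
        rw [hΔ]
        nlinarith [hF', hΛsq, hΛpos, habs]
  have hΔT : Δ₁ < T := by rw [hΔ, hT]; linarith
  -- the trajectory and control
  set x : ℝ → ℝ := fun t => x₀ + v₀ * t - σ₀ * t ^ 2 / 2 + σ₀ * max (t - Δ₁) 0 ^ 2 with hxdef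
  set v : ℝ → ℝ := fun t => v₀ - σ₀ * t + σ₀ * (2 * max (t - Δ₁) 0) with hvdef
  have hx : ∀ t, HasDerivAt x (v t) t := by
    intro t
    have h1 := (hasDeriv_sqmax Δ₁ t).const_mul σ₀
    have hpoly : HasDerivAt (fun s : ℝ => x₀ + v₀ * s - σ₀ * s ^ 2 / 2) (v₀ - σ₀ * t) t := by
      have := (((hasDerivAt_id t).const_mul v₀).const_add x₀).sub
        ((((hasDerivAt_id t).pow 2).const_mul σ₀).div_const 2)
      exact this.congr_deriv (by simp; ring)
    have := hpoly.add h1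
    exact this
  have hderiv : deriv x = v := funext fun t => (hx t).deriv
  have hvcont : Continuous v := by
    apply Continuous.add
    · exact (continuous_const.sub (continuous_const.mul continuous_id))
    · exact continuous_const.mul (continuous_const.mul
        ((continuous_id.sub continuous_const).max continuous_const))
  refine ⟨x, fun t => if t < Δ₁ then -σ₀ else σ₀, ?_, ?_, ?_, ?_, ?_, ?_, ?_, ?_, ?_⟩
  · rw [contDiff_one_iff_deriv]
    exact ⟨fun t => (hx t).differentiableAt, hderiv ▸ hvcont⟩
  · intro t _
    have : |σ₀| = 1 := by rcases hσ1 with h | h <;> rw [h] <;> norm_num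
    beta_reduce
    split_ifs <;> simp [abs_neg, this]
  · have h0 : max (0 - Δ₁) 0 = 0 := max_eq_right (by linarith)
    simp only [hxdef]
    rw [h0]; ring
  · rw [hderiv]
    have h0 : max (0 - Δ₁) 0 = 0 := max_eq_right (by linarith)
    simp only [hvdef]
    rw [h0]; ring
  · intro t _ hne
    rw [hderiv]
    beta_reduce
    rcases hne.lt_or_gt with hlt | hgt
    · have heq : v =ᶠ[𝓝 t] fun s => v₀ - σ₀ * s := by
        filter_upwards [eventually_lt_nhds hlt] with s hs
        simp [hvdef, max_eq_right (by linarith : s - Δ₁ ≤ 0)]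
      rw [heq.deriv_eq, if_pos hlt]
      have : HasDerivAt (fun s : ℝ => v₀ - σ₀ * s) (-σ₀) t := by
        have := (hasDerivAt_const t v₀).sub ((hasDerivAt_id t).const_mul σ₀)
        exact this.congr_deriv (by simp)
      exact this.deriv
    · have heq : v =ᶠ[𝓝 t] fun s => v₀ + σ₀ * s - 2 * σ₀ * Δ₁ := by
        filter_upwards [eventually_gt_nhds hgt] with s hs
        simp only [hvdef, max_eq_left (by linarith : (0:ℝ) ≤ s - Δ₁)]
        ring
      rw [heq.deriv_eq, if_neg (not_lt.mpr hgt.le)]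
      have : HasDerivAt (fun s : ℝ => v₀ + σ₀ * s - 2 * σ₀ * Δ₁) σ₀ t := by
        have := (((hasDerivAt_id t).const_mul σ₀).const_add v₀).sub_const (2 * σ₀ * Δ₁)
        simpa using this
      exact this.deriv
  · intro t _ h; beta_reduce; rw [if_pos h]
  · intro t _ h; beta_reduce; rw [if_neg (not_lt.mpr h.le)]
  · have hmax : max (T - Δ₁) 0 = T - Δ₁ := max_eq_left (by linarith)
    simp only [hxdef, hmax]
    rw [hΔ] at *
    rw [hT] at *
    linear_combination (-σ₀) * hΛsq + (-(x₀ + 2 * v₀ * Λ₀ + σ₀ * v₀ ^ 2 / 2)) * hσ2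
  · rw [hderiv]
    have hmax : max (T - Δ₁) 0 = T - Δ₁ := max_eq_left (by linarith)
    simp only [hvdef, hmax]
    rw [hΔ] at *
    rw [hT] at *
    linear_combination (-v₀) * hσ2
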